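/- Let f : U → ℂ be holomorphic on an open set U ⊆ ℂ and let c ∈ ℝ. Define w(t, x) = f(x + i·c·t) for (t, x) ∈ ℝ² with x + i·c·t ∈ U. Then, with subscripts denoting partial derivatives and bars complex conjugation, w satisfies at every such point: (i) wₜ·conj(wₓ) + conj(wₜ)·wₓ = 0 (normal motion), and (ii) Im[ conj(wₓ)·( |wₓ|²·wₜₜ + |wₜ|²·wₓₓ ) ] = 0. -/

import Mathlib

open Complex

private lemma derivT_aux {U : Set ℂ} (g : ℂ → ℂ) (hg : AnalyticOnNhd ℂ g U)
    (c t x : ℝ) (hz : ((x : ℂ) + Complex.I * c * t) ∈ U) :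
    HasDerivAt (fun s : ℝ => g ((x : ℂ) + Complex.I * c * s))
      (deriv g ((x : ℂ) + Complex.I * c * t) * (Complex.I * c)) t := by
  have hinner : HasDerivAt (fun z : ℂ => (x : ℂ) + Complex.I * c * z)
      (Complex.I * c) (t : ℂ) := by
    simpa using ((hasDerivAt_id (t : ℂ)).const_mul (Complex.I * c)).const_add (x : ℂ)
  have hgd : HasDerivAt g (deriv g ((x : ℂ) + Complex.I * c * t))
      ((x : ℂ) + Complex.I * c * t) := ((hg _ hz).differentiableAt).hasDerivAt
  have := (hgd.comp (t : ℂ) hinner)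
  exact this.comp_ofReal

private lemma derivX_aux {U : Set ℂ} (g : ℂ → ℂ) (hg : AnalyticOnNhd ℂ g U)
    (c t x : ℝ) (hz : ((x : ℂ) + Complex.I * c * t) ∈ U) :
    HasDerivAt (fun y : ℝ => g ((y : ℂ) + Complex.I * c * t))
      (deriv g ((x : ℂ) + Complex.I * c * t)) x := by
  have hinner : HasDerivAt (fun z : ℂ => z + Complex.I * c * t) 1 (x : ℂ) := by
    simpa using (hasDerivAt_id (x : ℂ)).add_const (Complex.I * c * t)
  have hgd : HasDerivAt g (deriv g ((x : ℂ) + Complex.I * c * t))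
      ((x : ℂ) + Complex.I * c * t) := ((hg _ hz).differentiableAt).hasDerivAt
  have := (hgd.comp (x : ℂ) hinner)
  simpa using this.comp_ofReal

/-- Any holomorphic f gives a geodesic: w(t,x) = f(x + ict) satisfies the normal-motion
condition wₜw̄ₓ + w̄ₜwₓ = 0 and Im[w̄ₓ(|wₓ|²wₜₜ + |wₜ|²wₓₓ)] = 0. -/
theorem stmt12 (U : Set ℂ) (hU : IsOpen U) (f : ℂ → ℂ) (hf : DifferentiableOn ℂ f U)
    (c : ℝ) (w : ℝ → ℝ → ℂ)
    (hw : ∀ t x : ℝ, w t x = f ((x : ℂ) + Complex.I * c * t)) :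
    ∀ t x : ℝ, ((x : ℂ) + Complex.I * c * t) ∈ U →
      (deriv (fun s => w s x) t * starRingEnd ℂ (deriv (w t) x) +
          starRingEnd ℂ (deriv (fun s => w s x) t) * deriv (w t) x = 0) ∧
        (starRingEnd ℂ (deriv (w t) x) *
            ((‖deriv (w t) x‖ : ℂ) ^ 2 *
                deriv (fun s => deriv (fun u => w u x) s) t +
              (‖deriv (fun s => w s x) t‖ : ℂ) ^ 2 *
                deriv (fun y => deriv (w t) y) x)).im = 0 := by
  intro t x hz
  have A : AnalyticOnNhd ℂ f U := hf.analyticOnNhd hU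
  have A' : AnalyticOnNhd ℂ (deriv f) U := A.deriv
  set z : ℂ := (x : ℂ) + Complex.I * c * t with hzdef
  set a : ℂ := deriv f z with ha
  set b : ℂ := deriv (deriv f) z with hb
  -- first derivatives
  have hwt : deriv (fun s => w s x) t = a * (Complex.I * c) := by
    have := (derivT_aux f A c t x hz).deriv
    rw [← this]
    congr 1; funext s; rw [hw]
  have hwx : deriv (w t) x = a := by
    have := (derivX_aux f A c t x hz).deriv
    rw [ha, hzdef, ← this]
    congr 1; funext y; rw [hw]
  -- openness of parameter sets
  have hcontT : Continuous (fun s : ℝ => (x : ℂ) + Complex.I * c * s) := by continuity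
  have hcontX : Continuous (fun y : ℝ => (y : ℂ) + Complex.I * c * t) := by continuity
  -- second derivative in t
  have hwtt : deriv (fun s => deriv (fun u => w u x) s) t = b * (Complex.I * c) * (Complex.I * c) := by
    have hev : (fun s => deriv (fun u => w u x) s)
        =ᶠ[nhds t] (fun s => deriv f ((x : ℂ) + Complex.I * c * s) * (Complex.I * c)) := by
      have hopen : IsOpen {s : ℝ | ((x : ℂ) + Complex.I * c * s) ∈ U} :=
        hU.preimage hcontT
      filter_upwards [hopen.mem_nhds hz] with s hs
      have := (derivT_aux f A c s x hs).deriv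
      rw [← this]
      congr 1; funext u; rw [hw]
    rw [hev.deriv_eq]
    have h1 : HasDerivAt (fun s : ℝ => deriv f ((x : ℂ) + Complex.I * c * s))
        (b * (Complex.I * c)) t := derivT_aux (deriv f) A' c t x hz
    exact (h1.mul_const (Complex.I * c)).deriv
  -- second derivative in x
  have hwxx : deriv (fun y => deriv (w t) y) x = b := by
    have hev : (fun y => deriv (w t) y)
        =ᶠ[nhds x] (fun y => deriv f ((y : ℂ) + Complex.I * c * t)) := by
      have hopen : IsOpen {y : ℝ | ((y : ℂ) + Complex.I * c * t) ∈ U} :=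
        hU.preimage hcontX
      filter_upwards [hopen.mem_nhds hz] with y hy
      have := (derivX_aux f A c t y hy).deriv
      rw [← this]
      congr 1; funext u; rw [hw]
    rw [hev.deriv_eq]
    exact (derivX_aux (deriv f) A' c t x hz).deriv
  rw [hwt, hwx, hwtt, hwxx]
  constructor
  · simp only [map_mul, Complex.conj_I, Complex.conj_ofReal]
    ring
  · have habs : ((‖a * (Complex.I * c)‖ : ℝ) : ℂ) ^ 2
        = (‖a‖ : ℂ) ^ 2 * (c : ℂ) ^ 2 := by
      rw [norm_mul, norm_mul, Complex.norm_I, Complex.norm_real, Real.norm_eq_abs]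
      norm_cast
      rw [mul_pow, mul_pow, _root_.sq_abs]
      ring
    rw [habs]
    have hzero : (starRingEnd ℂ) a *
        ((‖a‖ : ℂ) ^ 2 * (b * (Complex.I * c) * (Complex.I * c)) +
          (‖a‖ : ℂ) ^ 2 * (c : ℂ) ^ 2 * b) = 0 := by
      have hI : Complex.I * Complex.I = -1 := Complex.I_mul_I
      linear_combination ((starRingEnd ℂ) a * (‖a‖ : ℂ) ^ 2 * b * (c : ℂ) ^ 2) * hI
    rw [hzero]
    simp
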